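/- Fix constants 0 ≤ s₁ ≤ s₂ ≤ ∞. Let φ : [0,∞) → [0,∞) be continuously differentiable, monotonically increasing, with φ(s₂) = 1, and let φ₀ : [0,∞) → ℝ be continuously differentiable with φ₀(s) ≤ 0 for all s ≤ s₁. Let X ≥ 0 be a random variable such that P(X < s) ≥ φ₀(s) for all s ≥ 0. Then for all t ≥ 0, 𝔼[1_{[0,t)}(X) · φ̂(X)] ≤ φ̂(t) · P(X < t) − ∫_{s₁∧t}^{s₂∧t} φ′(s) φ₀(s) ds, where φ̂(s) = min(φ(s), 1). -/

import Mathlib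

open MeasureTheory Filter Topology
open scoped ProbabilityTheory

/-- Integration-by-parts lemma: if `φ` is `C¹`, increasing on `[0,∞)`, nonnegative there,
with `φ(s₂) = 1` (interpreted as `lim_{s→∞} φ(s) = 1` when `s₂ = ∞`), `φ₀` is `C¹` with
`φ₀ ≤ 0` on `[0, s₁]`, and `X ≥ 0` is a random variable with `P(X < s) ≥ φ₀(s)` for all
`s ≥ 0`, then for all `t ≥ 0`,
`𝔼[1_{[0,t)}(X) φ̂(X)] ≤ φ̂(t) P(X < t) − ∫_{s₁∧t}^{s₂∧t} φ′(s)φ₀(s) ds`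
where `φ̂ = min(φ, 1)`. -/
theorem indicator_expectation_int_by_parts {Ω : Type*} [MeasureSpace Ω]
    (hprob : IsProbabilityMeasure (ℙ : Measure Ω))
    (X : Ω → ℝ) (hXmeas : Measurable X) (hX0 : ∀ ω, 0 ≤ X ω)
    (s₁ : ℝ) (s₂ : EReal) (hs₁ : 0 ≤ s₁) (hs₁₂ : (s₁ : EReal) ≤ s₂)
    (φ φ₀ : ℝ → ℝ) (hφ : ContDiff ℝ 1 φ) (hφ₀ : ContDiff ℝ 1 φ₀)
    (hφmono : MonotoneOn φ (Set.Ici 0)) (hφnonneg : ∀ s : ℝ, 0 ≤ s → 0 ≤ φ s)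
    (hφtop : s₂ = ⊤ → Tendsto φ atTop (𝓝 1))
    (hφend : ∀ r : ℝ, s₂ = (r : EReal) → φ r = 1)
    (hφ₀neg : ∀ s : ℝ, 0 ≤ s → s ≤ s₁ → φ₀ s ≤ 0)
    (hP : ∀ s : ℝ, 0 ≤ s → φ₀ s ≤ (ℙ {ω | X ω < s}).toReal)
    (t : ℝ) (ht : 0 ≤ t) :
    ∫ ω, Set.indicator (Set.Ico (0 : ℝ) t) (fun _ => (1 : ℝ)) (X ω) * min (φ (X ω)) 1 ≤
      min (φ t) 1 * (ℙ {ω | X ω < t}).toReal -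
        ∫ s in (min s₁ t)..((min s₂ (t : EReal)).toReal), deriv φ s * φ₀ s := by
  classical
  have hφcont : Continuous φ := hφ.continuous
  have hφ'cont : Continuous (deriv φ) := hφ.continuous_deriv le_rfl
  have hφdiff : Differentiable ℝ φ := hφ.differentiable one_ne_zero
  set T : ℝ := (min s₂ (t : EReal)).toReal with hTdef
  -- basic facts about T
  obtain ⟨hT0, hTt, hTs₂, hmin⟩ :
      0 ≤ T ∧ T ≤ t ∧ ((T : ℝ) : EReal) ≤ s₂ ∧ min s₁ t = min s₁ T := by
    rw [hTdef]
    clear hTdef hφtop hφend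
    revert hs₁₂
    induction s₂ using EReal.rec with
    | bot =>
      intro h
      exact absurd (le_bot_iff.1 h) (EReal.coe_ne_bot s₁)
    | top =>
      intro _
      rw [min_eq_right (le_top : (t : EReal) ≤ ⊤), EReal.toReal_coe]
      exact ⟨ht, le_rfl, le_top, rfl⟩
    | coe r =>
      intro h
      have hr : s₁ ≤ r := EReal.coe_le_coe_iff.1 h
      have hr0 : 0 ≤ r := hs₁.trans hr
      rw [← EReal.coe_strictMono.monotone.map_min, EReal.toReal_coe]
      refine ⟨le_min hr0 ht, min_le_right _ _, ?_, ?_⟩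
      · exact EReal.coe_le_coe_iff.2 (min_le_left _ _)
      · rw [← min_assoc, min_eq_left hr]
  -- φ is at most 1 below s₂
  have hφle1 : ∀ x : ℝ, 0 ≤ x → ((x : ℝ) : EReal) ≤ s₂ → φ x ≤ 1 := by
    clear hTdef hmin hTs₂
    revert hs₁₂ hφtop hφend
    induction s₂ using EReal.rec with
    | bot =>
      intro h _ _
      exact absurd (le_bot_iff.1 h) (EReal.coe_ne_bot s₁)
    | top =>
      intro _ htop _ x hx _
      refine ge_of_tendsto (htop rfl) ?_
      filter_upwards [eventually_ge_atTop x] with y hy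
      exact hφmono (Set.mem_Ici.2 hx) (Set.mem_Ici.2 (hx.trans hy)) hy
    | coe r =>
      intro h _ hend x hx hxr
      have h1 : φ r = 1 := hend r rfl
      have hxr' : x ≤ r := EReal.coe_le_coe_iff.1 hxr
      calc φ x ≤ φ r := hφmono (Set.mem_Ici.2 hx) (Set.mem_Ici.2 (hx.trans hxr')) hxr'
        _ = 1 := h1
  have hφT1 : φ T ≤ 1 := hφle1 T hT0 hTs₂
  -- cdf
  set P : ℝ → ℝ := fun s => (ℙ {ω | X ω < s}).toReal with hPdef
  have hPmono : Monotone P := by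
    intro a b hab
    exact ENNReal.toReal_mono (measure_ne_top _ _)
      (measure_mono fun ω (hω : X ω < a) => hω.trans_le hab)
  have hPmeas : Measurable P := hPmono.measurable
  have hPnn : ∀ s, 0 ≤ P s := fun s => ENNReal.toReal_nonneg
  have hPle1 : ∀ s, P s ≤ 1 := by
    intro s
    have h1 : ℙ {ω | X ω < s} ≤ 1 := prob_le_one
    calc P s ≤ (1 : ENNReal).toReal := ENNReal.toReal_mono ENNReal.one_ne_top h1
      _ = 1 := by simp
  have hsetmeas : ∀ s : ℝ, MeasurableSet {ω | X ω < s} := fun s =>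
    hXmeas measurableSet_Iio
  -- derivative of φ is nonnegative on [0,∞)
  have hφ'nn : ∀ s : ℝ, 0 ≤ s → 0 ≤ deriv φ s := by
    intro s hs
    have hd : Tendsto (slope φ s) (𝓝[>] s) (𝓝 (deriv φ s)) :=
      (hasDerivAt_iff_tendsto_slope.1 (hφdiff s).hasDerivAt).mono_left
        (nhdsWithin_mono s fun y hy => ne_of_gt hy)
    refine ge_of_tendsto hd ?_
    filter_upwards [self_mem_nhdsWithin] with y hy
    have hy' : s < y := hy
    have : φ s ≤ φ y := hφmono (Set.mem_Ici.2 hs) (Set.mem_Ici.2 (hs.trans hy'.le)) hy'.le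
    rw [slope_def_field]
    exact div_nonneg (by linarith) (by linarith)
  -- FTC
  have hFTC : ∀ x : ℝ, ∫ s in Set.Ioc x T, deriv φ s = φ T - φ (min x T) := by
    intro x
    rcases le_or_gt x T with h | h
    · rw [← intervalIntegral.integral_of_le h,
        intervalIntegral.integral_deriv_eq_sub (fun y _ => hφdiff y)
          (hφ'cont.intervalIntegrable x T), min_eq_left h]
    · rw [Set.Ioc_eq_empty (not_lt.2 h.le), min_eq_right h.le]
      simp
  -- bound on deriv φ on [0, T]
  obtain ⟨M, hM⟩ : ∃ M : ℝ, ∀ y ∈ Set.Icc (0 : ℝ) T, ‖deriv φ y‖ ≤ M :=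
    isCompact_Icc.exists_bound_of_continuousOn hφ'cont.continuousOn
  have hM0 : 0 ≤ M := le_trans (norm_nonneg _) (hM 0 ⟨le_rfl, hT0⟩)
  -- the Fubini step
  set S : Set (Ω × ℝ) :=
    {q : Ω × ℝ | q.2 ∈ Set.Ioc (0 : ℝ) T} ∩ {q : Ω × ℝ | X q.1 < q.2} with hSdef
  have hSmeas : MeasurableSet S :=
    (measurable_snd measurableSet_Ioc).inter
      (measurableSet_lt (hXmeas.comp measurable_fst) measurable_snd)
  set F : Ω → ℝ → ℝ := fun ω s =>
    Set.indicator (Set.Ioc (0 : ℝ) T ∩ Set.Ioi (X ω)) (deriv φ) s with hFdef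
  have hFeq : Function.uncurry F = S.indicator fun q => deriv φ q.2 := by
    funext q
    simp only [Function.uncurry, hFdef, hSdef, Set.indicator_apply, Set.mem_inter_iff,
      Set.mem_Ioi, Set.mem_setOf_eq]
  have hintF : Integrable (Function.uncurry F) ((ℙ : Measure Ω).prod volume) := by
    rw [hFeq]
    have hμS : ((ℙ : Measure Ω).prod volume) (Set.univ ×ˢ Set.Ioc (0 : ℝ) T) < ⊤ := by
      rw [Measure.prod_prod]
      exact ENNReal.mul_lt_top (measure_lt_top _ _) (by simp [Real.volume_Ioc])
    have hg : Integrable ((Set.univ ×ˢ Set.Ioc (0 : ℝ) T).indicator fun _ => M)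
        ((ℙ : Measure Ω).prod volume) :=
      (integrable_indicator_iff (MeasurableSet.univ.prod measurableSet_Ioc)).2
        (integrableOn_const hμS.ne)
    refine hg.mono'
      (((hφ'cont.measurable.comp measurable_snd).indicator hSmeas).aestronglyMeasurable) ?_
    filter_upwards with q
    by_cases hq : q ∈ S
    · have hq1 : q.2 ∈ Set.Ioc (0 : ℝ) T := hq.1
      have h2 : q ∈ (Set.univ ×ˢ Set.Ioc (0 : ℝ) T : Set (Ω × ℝ)) := ⟨Set.mem_univ _, hq1⟩
      rw [Set.indicator_of_mem hq, Set.indicator_of_mem h2]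
      exact hM q.2 (Set.mem_Icc_of_Ioc hq1)
    · rw [Set.indicator_of_notMem hq, norm_zero]
      exact Set.indicator_nonneg (fun _ _ => hM0) q
  have hswap := MeasureTheory.integral_integral_swap hintF
  have hL : ∀ ω, ∫ s, F ω s = φ T - φ (min (X ω) T) := by
    intro ω
    rw [hFdef]
    rw [integral_indicator (measurableSet_Ioc.inter measurableSet_Ioi)]
    rw [Set.Ioc_inter_Ioi, sup_eq_right.2 (hX0 ω)]
    exact hFTC (X ω)
  have hR : ∀ s : ℝ, (∫ ω, F ω s ∂ℙ) =
      Set.indicator (Set.Ioc (0 : ℝ) T) (fun s => P s * deriv φ s) s := by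
    intro s
    have h1 : ∀ ω, F ω s =
        Set.indicator {ω' | X ω' < s}
          (fun _ => Set.indicator (Set.Ioc (0 : ℝ) T) (deriv φ) s) ω := by
      intro ω
      simp only [hFdef, Set.indicator_apply, Set.mem_inter_iff, Set.mem_Ioi, Set.mem_setOf_eq]
      by_cases hω : X ω < s <;> by_cases hs' : s ∈ Set.Ioc (0 : ℝ) T <;>
        simp [hω, hs']
    simp only [h1]
    rw [integral_indicator_const _ (hsetmeas s)]
    by_cases hs : s ∈ Set.Ioc (0 : ℝ) T
    · rw [Set.indicator_of_mem hs, Set.indicator_of_mem hs, smul_eq_mul, measureReal_def]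
    · rw [Set.indicator_of_notMem hs, Set.indicator_of_notMem hs, smul_zero]
  simp only [hL, hR] at hswap
  rw [integral_indicator measurableSet_Ioc] at hswap
  -- hswap : ∫ ω, (φ T - φ (min (X ω) T)) ∂ℙ = ∫ s in Ioc 0 T, P s * deriv φ s
  -- step (b): lower bound on the right-hand side
  set m : ℝ := min s₁ t with hmdef
  have hm0 : 0 ≤ m := le_min hs₁ ht
  have hmT : m ≤ T := hmin.trans_le (min_le_right s₁ T)
  have hintPφ' : IntegrableOn (fun s => P s * deriv φ s) (Set.Ioc 0 T) := by
    refine Integrable.mono' (integrable_const M)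
      ((hPmeas.mul hφ'cont.measurable).aestronglyMeasurable) ?_
    filter_upwards [ae_restrict_mem measurableSet_Ioc] with s hs
    calc ‖P s * deriv φ s‖ = ‖P s‖ * ‖deriv φ s‖ := norm_mul _ _
      _ ≤ 1 * M := by
          refine mul_le_mul ?_ (hM s (Set.mem_Icc_of_Ioc hs)) (norm_nonneg _) one_pos.le
          rw [Real.norm_eq_abs, abs_of_nonneg (hPnn s)]
          exact hPle1 s
      _ = M := one_mul M
  have hb : (∫ s in m..T, deriv φ s * φ₀ s) ≤ ∫ s in Set.Ioc 0 T, P s * deriv φ s := by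
    rw [intervalIntegral.integral_of_le hmT]
    have hsplit : (∫ s in Set.Ioc 0 T, P s * deriv φ s) =
        (∫ s in Set.Ioc 0 m, P s * deriv φ s) + ∫ s in Set.Ioc m T, P s * deriv φ s := by
      rw [← MeasureTheory.setIntegral_union (Set.Ioc_disjoint_Ioc_of_le le_rfl) measurableSet_Ioc
        (hintPφ'.mono_set (Set.Ioc_subset_Ioc_right hmT))
        (hintPφ'.mono_set (Set.Ioc_subset_Ioc_left hm0)),
        Set.Ioc_union_Ioc_eq_Ioc hm0 hmT]
    have h1 : 0 ≤ ∫ s in Set.Ioc 0 m, P s * deriv φ s :=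
      setIntegral_nonneg measurableSet_Ioc fun s hs =>
        mul_nonneg (hPnn s) (hφ'nn s hs.1.le)
    have h2 : (∫ s in Set.Ioc m T, deriv φ s * φ₀ s) ≤
        ∫ s in Set.Ioc m T, P s * deriv φ s := by
      refine setIntegral_mono_on
        ((hφ'cont.mul hφ₀.continuous).integrableOn_Ioc)
        (hintPφ'.mono_set (Set.Ioc_subset_Ioc_left hm0)) measurableSet_Ioc ?_
      intro s hs
      have hs0 : 0 ≤ s := hm0.trans hs.1.le
      calc deriv φ s * φ₀ s ≤ deriv φ s * P s :=
            mul_le_mul_of_nonneg_left (hP s hs0) (hφ'nn s hs0)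
        _ = P s * deriv φ s := mul_comm _ _
    rw [hsplit]
    linarith
  -- step (a): pointwise inequality and integration
  set f₁ : Ω → ℝ := fun ω =>
    Set.indicator (Set.Ico (0 : ℝ) t) (fun _ => (1 : ℝ)) (X ω) * min (φ (X ω)) 1 with hf₁def
  set f₂ : Ω → ℝ := fun ω => φ T - φ (min (X ω) T) with hf₂def
  set f₃ : Ω → ℝ := fun ω =>
    Set.indicator {ω' | X ω' < t} (fun _ => min (φ t) 1) ω with hf₃def
  have hint1 : Integrable f₁ ℙ := by
    refine Integrable.mono' (integrable_const 1)
      (((measurable_const.indicator measurableSet_Ico).comp hXmeas).mul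
        ((hφcont.measurable.comp hXmeas).min measurable_const)).aestronglyMeasurable ?_
    filter_upwards with ω
    simp only [hf₁def]
    have h1 : (0:ℝ) ≤ Set.indicator (Set.Ico (0 : ℝ) t) (fun _ => (1 : ℝ)) (X ω) :=
      Set.indicator_nonneg (fun _ _ => zero_le_one) _
    have h2 : Set.indicator (Set.Ico (0 : ℝ) t) (fun _ => (1 : ℝ)) (X ω) ≤ 1 := by
      by_cases h : X ω ∈ Set.Ico (0:ℝ) t <;> simp [Set.indicator_apply, h]
    have h3 : (0:ℝ) ≤ min (φ (X ω)) 1 := le_min (hφnonneg _ (hX0 ω)) zero_le_one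
    have h4 : min (φ (X ω)) 1 ≤ 1 := min_le_right _ _
    rw [Real.norm_eq_abs, abs_of_nonneg (mul_nonneg h1 h3)]
    calc Set.indicator (Set.Ico (0 : ℝ) t) (fun _ => (1 : ℝ)) (X ω) * min (φ (X ω)) 1
        ≤ 1 * 1 := mul_le_mul h2 h4 h3 zero_le_one
      _ = 1 := one_mul 1
  have hint2 : Integrable f₂ ℙ := by
    refine Integrable.mono' (integrable_const (φ T - φ 0))
      (measurable_const.sub
        (hφcont.measurable.comp (hXmeas.min measurable_const))).aestronglyMeasurable ?_
    filter_upwards with ω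
    simp only [hf₂def]
    have hy0 : 0 ≤ min (X ω) T := le_min (hX0 ω) hT0
    have hyT : min (X ω) T ≤ T := min_le_right _ _
    have h1 : φ (min (X ω) T) ≤ φ T :=
      hφmono (Set.mem_Ici.2 hy0) (Set.mem_Ici.2 hT0) hyT
    have h2 : φ 0 ≤ φ (min (X ω) T) :=
      hφmono (Set.mem_Ici.2 le_rfl) (Set.mem_Ici.2 hy0) hy0
    rw [Real.norm_eq_abs, abs_of_nonneg (by linarith)]
    linarith
  have hint3 : Integrable f₃ ℙ := by
    rw [hf₃def]
    exact (integrable_indicator_iff (hsetmeas t)).2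
      (integrableOn_const (measure_ne_top _ _))
  have hpt : ∀ ω, f₁ ω + f₂ ω ≤ f₃ ω := by
    intro ω
    simp only [hf₁def, hf₂def, hf₃def]
    rcases lt_or_ge (X ω) t with h | h
    · have hmem : X ω ∈ Set.Ico (0 : ℝ) t := ⟨hX0 ω, h⟩
      have hmem' : ω ∈ {ω' | X ω' < t} := h
      rw [Set.indicator_of_mem hmem, Set.indicator_of_mem hmem', one_mul]
      rcases lt_or_ge (X ω) T with hxT | hxT
      · rw [min_eq_left hxT.le]
        have h1 : min (φ (X ω)) 1 ≤ φ (X ω) := min_le_left _ _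
        have h2 : φ T ≤ φ t := hφmono (Set.mem_Ici.2 hT0) (Set.mem_Ici.2 ht) hTt
        have h3 : φ T ≤ min (φ t) 1 := le_min h2 hφT1
        linarith
      · rw [min_eq_right hxT]
        have h1 : φ (X ω) ≤ φ t := hφmono (Set.mem_Ici.2 (hX0 ω)) (Set.mem_Ici.2 ht) h.le
        have h2 : min (φ (X ω)) 1 ≤ min (φ t) 1 := min_le_min h1 le_rfl
        linarith
    · have hmem : X ω ∉ Set.Ico (0 : ℝ) t := fun hc => absurd hc.2 (not_lt.2 h)
      have hmem' : ω ∉ {ω' | X ω' < t} := not_lt.2 h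
      rw [Set.indicator_of_notMem hmem, Set.indicator_of_notMem hmem', zero_mul,
        min_eq_right (hTt.trans h)]
      simp
  have ha : (∫ ω, f₁ ω ∂ℙ) + (∫ ω, f₂ ω ∂ℙ) ≤ min (φ t) 1 * P t := by
    calc (∫ ω, f₁ ω ∂ℙ) + (∫ ω, f₂ ω ∂ℙ) = ∫ ω, (f₁ ω + f₂ ω) ∂ℙ :=
          (integral_add hint1 hint2).symm
      _ ≤ ∫ ω, f₃ ω ∂ℙ := integral_mono (hint1.add hint2) hint3 hpt
      _ = min (φ t) 1 * P t := by
          simp only [hf₃def]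
          rw [integral_indicator_const _ (hsetmeas t), smul_eq_mul, measureReal_def, mul_comm]
  -- conclusion
  have hBeq : (∫ ω, f₂ ω ∂ℙ) = ∫ s in Set.Ioc 0 T, P s * deriv φ s := hswap
  have hfinal : (∫ ω, f₁ ω ∂ℙ) ≤ min (φ t) 1 * P t - ∫ s in m..T, deriv φ s * φ₀ s := by
    have := hb
    rw [← hBeq] at this
    linarith
  exact hfinal
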